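/- Let x, y, d, n be integers with n ≥ 2 and gcd(x,d) = 1, and suppose (x-d)^5 + x^5 + (x+d)^5 = y^n. Set κ = gcd(x,10). Then there exist integers a and b such that x = κ^(n-1) · a^n, 3x^4 + 20x^2 d^2 + 10 d^4 = κ · b^n, and gcd(κ·a, b) = 1. -/

import Mathlib

theorem stmt_6 (x y d : ℤ) (n : ℕ) (hn : 2 ≤ n) (hgcd : Int.gcd x d = 1)
    (heq : (x - d) ^ 5 + x ^ 5 + (x + d) ^ 5 = y ^ n) :
    ∃ a b : ℤ, x = (Int.gcd x 10 : ℤ) ^ (n - 1) * a ^ n ∧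
      3 * x ^ 4 + 20 * x ^ 2 * d ^ 2 + 10 * d ^ 4 = (Int.gcd x 10 : ℤ) * b ^ n ∧
      Int.gcd ((Int.gcd x 10 : ℤ) * a) b = 1 := by
  set κ : ℤ := (Int.gcd x 10 : ℤ) with hκdef
  set Q : ℤ := 3 * x ^ 4 + 20 * x ^ 2 * d ^ 2 + 10 * d ^ 4 with hQdef
  have hκx : κ ∣ x := Int.gcd_dvd_left x 10
  have hκ10 : κ ∣ (10 : ℤ) := Int.gcd_dvd_right x 10
  have hκpos : 0 < κ := by
    have : Int.gcd x 10 ≠ 0 := by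
      intro h
      rw [Int.gcd_eq_zero_iff] at h
      norm_num at h
    positivity
  have hκ0 : κ ≠ 0 := ne_of_gt hκpos
  -- κ divides Q
  have hκQ : κ ∣ Q := by
    have h1 : Q = x * (3 * x ^ 3 + 20 * x * d ^ 2) + 10 * d ^ 4 := by rw [hQdef]; ring
    rw [h1]
    exact dvd_add (hκx.mul_right _) (hκ10.mul_right _)
  obtain ⟨q, hq⟩ := hκQ
  have hmul : x * κ * q = y ^ n := by
    rw [mul_assoc, ← hq, ← heq, hQdef]; ring
  -- positivity of Q
  have hQpos : 0 < Q := by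
    rcases eq_or_ne d 0 with rfl | hd0
    · have hx0 : x ≠ 0 := by
        intro h; rw [h] at hgcd; simp [Int.gcd] at hgcd
      have : 0 < x ^ 4 := by positivity
      rw [hQdef]; nlinarith
    · have : 0 < d ^ 4 := by positivity
      rw [hQdef]; nlinarith [sq_nonneg (x ^ 2), sq_nonneg (x * d)]
  have hqpos : 0 < q := by
    by_contra h
    push_neg at h
    nlinarith
  -- coprimality of x*κ and q
  have hgcd1 : Int.gcd (x * κ) q = 1 := by
    by_contra hne
    obtain ⟨p, hp, hpdvd⟩ := Nat.exists_prime_and_dvd hne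
    have hppz : Prime (p : ℤ) := Nat.prime_iff_prime_int.mp hp
    have hpxκ : (p : ℤ) ∣ x * κ :=
      dvd_trans (Int.natCast_dvd_natCast.mpr hpdvd) (Int.gcd_dvd_left _ _)
    have hpq : (p : ℤ) ∣ q :=
      dvd_trans (Int.natCast_dvd_natCast.mpr hpdvd) (Int.gcd_dvd_right _ _)
    have hpx : (p : ℤ) ∣ x := by
      rcases hppz.dvd_mul.mp hpxκ with h | h
      · exact h
      · exact h.trans hκx
    have hpnd : ¬ (p : ℤ) ∣ d := by
      intro hpd
      have := Int.dvd_gcd hpx hpd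
      rw [hgcd] at this
      exact hppz.not_dvd_one (by exact_mod_cast this)
    have hpQ : (p : ℤ) ∣ Q := hq ▸ hpq.mul_left κ
    have hp10d : (p : ℤ) ∣ 10 * d ^ 4 := by
      have h1 : 10 * d ^ 4 = Q - x * (3 * x ^ 3 + 20 * x * d ^ 2) := by rw [hQdef]; ring
      rw [h1]
      exact dvd_sub hpQ (hpx.mul_right _)
    have hp10 : (p : ℤ) ∣ 10 := by
      rcases hppz.dvd_mul.mp hp10d with h | h
      · exact h
      · exact absurd (hppz.dvd_of_dvd_pow h) hpnd
    have hpκ : (p : ℤ) ∣ κ := Int.dvd_coe_gcd hpx hp10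
    have hppQ : (p : ℤ) * (p : ℤ) ∣ Q := hq ▸ mul_dvd_mul hpκ hpq
    have hp10n : p ∣ 10 := by exact_mod_cast hp10
    have hc : p = 2 ∨ p = 5 := by
      have := Nat.le_of_dvd (by norm_num) hp10n
      interval_cases p <;> revert hp hp10n <;> decide
    obtain ⟨x1, hx1⟩ := hpx
    rcases hc with rfl | rfl
    · -- p = 2 : show 4 ∤ Q
      push_cast at hppQ hx1
      have h4 : (4 : ℤ) ∣ 10 * d ^ 4 := by
        have h1 : 10 * d ^ 4 = Q - 4 * (12 * x1 ^ 4 + 20 * x1 ^ 2 * d ^ 2) := by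
          rw [hQdef, hx1]; ring
        rw [h1]
        exact dvd_sub hppQ (Dvd.intro _ rfl)
      obtain ⟨k, hk⟩ := h4
      have h2 : (2 : ℤ) ∣ 5 * d ^ 4 := ⟨k, by linarith⟩
      have : (2 : ℤ) ∣ d := by
        have hpr : Prime (2 : ℤ) := Int.prime_two
        rcases hpr.dvd_mul.mp h2 with h | h
        · norm_num at h
        · exact hpr.dvd_of_dvd_pow h
      exact hpnd (by exact_mod_cast this)
    · -- p = 5 : show 25 ∤ Q
      push_cast at hppQ hx1
      have h25 : (25 : ℤ) ∣ 10 * d ^ 4 := by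
        have h1 : 10 * d ^ 4 = Q - 25 * (75 * x1 ^ 4 + 20 * x1 ^ 2 * d ^ 2) := by
          rw [hQdef, hx1]; ring
        rw [h1]
        exact dvd_sub hppQ (Dvd.intro _ rfl)
      obtain ⟨k, hk⟩ := h25
      have h5 : (5 : ℤ) ∣ 2 * d ^ 4 := ⟨k, by linarith⟩
      have : (5 : ℤ) ∣ d := by
        have hpr : Prime (5 : ℤ) := by norm_num
        rcases hpr.dvd_mul.mp h5 with h | h
        · norm_num at h
        · exact hpr.dvd_of_dvd_pow h
      exact hpnd (by exact_mod_cast this)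
  have hcop : IsCoprime (x * κ) q := Int.isCoprime_iff_gcd_eq_one.mpr hgcd1
  have hnpos : 0 < n := by omega
  -- get x*κ as an n-th power
  obtain ⟨c, hc⟩ := exists_associated_pow_of_mul_eq_pow' hcop hmul
  obtain ⟨u, hu⟩ := hc
  have hceq : ∃ c : ℤ, x * κ = c ^ n := by
    rcases Int.units_eq_one_or u with rfl | rfl
    · exact ⟨c, by simpa using hu.symm⟩
    · rcases Nat.even_or_odd n with he | ho
      · -- even case: x*κ ≥ 0 forces both zero
        refine ⟨c, ?_⟩
        have h1 : x * κ = -(c ^ n) := by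
          rw [← hu]; simp
        have hyn : 0 ≤ y ^ n := he.pow_nonneg y
        have hxnn : 0 ≤ x := by nlinarith
        have hxκnn : 0 ≤ x * κ := mul_nonneg hxnn (le_of_lt hκpos)
        have hcnn : 0 ≤ c ^ n := he.pow_nonneg c
        linarith
      · exact ⟨-c, by rw [ho.neg_pow, ← hu]; simp⟩
  obtain ⟨c, hceq⟩ := hceq
  -- κ divides c
  have hsfκ : Squarefree κ := by
    have h10 : Squarefree (10 : ℤ) := by
      have h25 : Squarefree ((2 : ℕ) * 5) :=
        (Nat.squarefree_mul (by norm_num)).mpr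
          ⟨Nat.prime_two.squarefree, (by norm_num : Nat.Prime 5).squarefree⟩
      rw [show ((10:ℤ)) = (((2*5 : ℕ)):ℤ) by norm_num, Int.squarefree_natCast]
      exact h25
    exact h10.squarefree_of_dvd hκ10
  have hκc : κ ∣ c := by
    rw [← hsfκ.dvd_pow_iff_dvd (n := n) (by omega), ← hceq]
    exact dvd_mul_left κ x
  obtain ⟨a, rfl⟩ := hκc
  -- get q as an n-th power
  obtain ⟨e, he'⟩ := exists_associated_pow_of_mul_eq_pow' hcop.symm
    (by rw [mul_comm]; exact hmul)
  obtain ⟨v, hv⟩ := he'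
  have hqeq : ∃ b : ℤ, q = b ^ n := by
    rcases Int.units_eq_one_or v with rfl | rfl
    · exact ⟨e, by simpa using hv.symm⟩
    · rcases Nat.even_or_odd n with hev | ho
      · exfalso
        have h1 : q = -(e ^ n) := by rw [← hv]; simp
        have : 0 ≤ e ^ n := hev.pow_nonneg e
        linarith
      · exact ⟨-e, by rw [ho.neg_pow, ← hv]; simp⟩
  obtain ⟨b, rfl⟩ := hqeq
  refine ⟨a, b, ?_, ?_, ?_⟩
  · -- x = κ^(n-1) * a^n
    obtain ⟨m, rfl⟩ : ∃ m, n = m + 1 := ⟨n - 1, by omega⟩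
    have hm1 : m + 1 - 1 = m := by omega
    rw [hm1]
    have h1 : x * κ = (κ ^ m * a ^ (m + 1)) * κ := by
      rw [hceq]; ring
    exact mul_right_cancel₀ hκ0 h1
  · rw [hq]
  · rw [← Int.isCoprime_iff_gcd_eq_one]
    have h1 : IsCoprime ((κ * a) ^ n) (b ^ n) := by
      rw [mul_pow, ← hceq] at *
      exact hcop
    exact ((IsCoprime.pow_left_iff hnpos).mp ((IsCoprime.pow_right_iff hnpos).mp h1))
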